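/- There exists a constant C > 0 such that for all ε ∈ (0,1): P(D₂ ≤ √ε) ≤ C · ε. -/

import Mathlib

open MeasureTheory ProbabilityTheory Real Filter
open Set
open scoped ENNReal

/-- Density of the Beta distribution `β(u,v)` with respect to Lebesgue measure. -/
noncomputable def betaPDFReal (u v x : ℝ) : ℝ :=
  if 0 < x ∧ x < 1 then
    Real.Gamma (u + v) / (Real.Gamma u * Real.Gamma v) * x ^ (u - 1) * (1 - x) ^ (v - 1)
  else 0

/-- The Beta distribution `β(u,v)` on `ℝ`. -/
noncomputable def betaMeasure (u v : ℝ) : Measure ℝ :=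
  volume.withDensity fun x => ENNReal.ofReal (_root_.betaPDFReal u v x)

/-- Density of the generalized Gamma distribution `GG(u,v)` w.r.t. Lebesgue measure. -/
noncomputable def genGammaPDFReal (u v x : ℝ) : ℝ :=
  if 0 < x then v / Real.Gamma (u / v) * x ^ (u - 1) * Real.exp (-(x ^ v)) else 0

/-- The generalized Gamma distribution `GG(u,v)` on `ℝ`. -/
noncomputable def genGammaMeasure (u v : ℝ) : Measure ℝ :=
  volume.withDensity fun x => ENNReal.ofReal (genGammaPDFReal u v x)

lemma betaPDF_measurable (u v : ℝ) : Measurable (_root_.betaPDFReal u v) := by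
  unfold _root_.betaPDFReal
  apply Measurable.ite
  · exact (measurableSet_lt measurable_const measurable_id).inter
      (measurableSet_lt measurable_id measurable_const)
  · fun_prop
  · fun_prop

lemma genGammaPDF_measurable (u v : ℝ) : Measurable (genGammaPDFReal u v) := by
  unfold genGammaPDFReal
  apply Measurable.ite (measurableSet_lt measurable_const measurable_id) ?_ measurable_const
  fun_prop

/-- tail bound for β(1,2). -/
lemma beta12_tail {δ : ℝ} (hδ : 0 ≤ δ) :
    _root_.betaMeasure 1 2 {x | 1 - x ≤ δ} ≤ ENNReal.ofReal (2 * δ ^ 2) := by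
  have hs : MeasurableSet {x : ℝ | 1 - x ≤ δ} :=
    measurableSet_le (by fun_prop) measurable_const
  rw [_root_.betaMeasure, withDensity_apply _ hs]
  have hbound : ∀ x ∈ {x : ℝ | 1 - x ≤ δ},
      ENNReal.ofReal (_root_.betaPDFReal 1 2 x)
        ≤ (Icc (1 - δ) 1).indicator (fun _ => ENNReal.ofReal (2 * δ)) x := by
    intro x hx
    simp only [mem_setOf_eq] at hx
    unfold _root_.betaPDFReal
    split_ifs with h
    · have hx1 : 1 - δ ≤ x := by linarith
      have hx2 : x ≤ 1 := le_of_lt h.2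
      rw [indicator_of_mem (mem_Icc.2 ⟨hx1, hx2⟩)]
      apply ENNReal.ofReal_le_ofReal
      have hΓ : Real.Gamma ((1:ℝ) + 2) = 2 := by
        rw [show (1:ℝ) + 2 = 2 + 1 by norm_num,
          Real.Gamma_add_one (by norm_num : (2:ℝ) ≠ 0), Real.Gamma_two]; norm_num
      rw [hΓ, Real.Gamma_one, Real.Gamma_two]
      have h0 : x ^ ((1:ℝ) - 1) = 1 := by norm_num
      have h1 : (1 - x) ^ ((2:ℝ) - 1) = 1 - x := by norm_num
      rw [h0, h1]
      nlinarith [h.1, h.2]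
    · simpa using zero_le
  calc ∫⁻ x in {x : ℝ | 1 - x ≤ δ}, ENNReal.ofReal (_root_.betaPDFReal 1 2 x)
      ≤ ∫⁻ x in {x : ℝ | 1 - x ≤ δ},
          (Icc (1 - δ) 1).indicator (fun _ => ENNReal.ofReal (2 * δ)) x :=
        setLIntegral_mono (measurable_const.indicator measurableSet_Icc) hbound
    _ ≤ ∫⁻ x, (Icc (1 - δ) 1).indicator (fun _ => ENNReal.ofReal (2 * δ)) x :=
        setLIntegral_le_lintegral _ _
    _ = ENNReal.ofReal (2 * δ) * volume (Icc (1 - δ) 1) := by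
        rw [lintegral_indicator measurableSet_Icc, setLIntegral_const]
    _ ≤ ENNReal.ofReal (2 * δ ^ 2) := by
        rw [Real.volume_Icc, show (1 : ℝ) - (1 - δ) = δ by ring,
          ← ENNReal.ofReal_mul (by positivity)]
        apply ENNReal.ofReal_le_ofReal; nlinarith

noncomputable def invSq (w : ℝ) : ℝ≥0∞ := ((ENNReal.ofReal w)⁻¹) ^ 2

lemma invSq_meas : Measurable invSq := by
  unfold invSq; fun_prop

lemma invSq_of_pos {w : ℝ} (hw : 0 < w) : invSq w = ENNReal.ofReal (w⁻¹ * w⁻¹) := by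
  rw [invSq, ← ENNReal.ofReal_inv_of_pos hw, sq, ← ENNReal.ofReal_mul (by positivity)]

lemma invSq_mul {a b : ℝ} (ha : 0 < a) (hb : 0 < b) :
    invSq (a * b) = invSq a * invSq b := by
  rw [invSq_of_pos (mul_pos ha hb), invSq_of_pos ha, invSq_of_pos hb,
    ← ENNReal.ofReal_mul (by positivity)]
  congr 1
  field_simp

lemma beta31_moment : ∫⁻ x, invSq x ∂(_root_.betaMeasure 3 1) ≤ 3 := by
  rw [_root_.betaMeasure, lintegral_withDensity_eq_lintegral_mul volume
    (betaPDF_measurable 3 1).ennreal_ofReal invSq_meas]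
  have hbound : ∀ x : ℝ, (fun x => ENNReal.ofReal (_root_.betaPDFReal 3 1 x) * invSq x) x
      ≤ (Ioo (0:ℝ) 1).indicator (fun _ => (3 : ℝ≥0∞)) x := by
    intro x
    simp only
    unfold _root_.betaPDFReal
    split_ifs with h
    · rw [indicator_of_mem (mem_Ioo.2 h), invSq_of_pos h.1]
      have hΓ : Real.Gamma ((3:ℝ) + 1) / (Real.Gamma 3 * Real.Gamma 1) = 3 := by
        have h3 : Real.Gamma (3:ℝ) = 2 := by
          rw [show (3:ℝ) = 2 + 1 by norm_num,
            Real.Gamma_add_one (by norm_num : (2:ℝ) ≠ 0), Real.Gamma_two]; norm_num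
        have h4 : Real.Gamma ((3:ℝ) + 1) = 6 := by
          rw [Real.Gamma_add_one (by norm_num : (3:ℝ) ≠ 0), h3]; norm_num
        rw [h3, h4, Real.Gamma_one]; norm_num
      rw [hΓ]
      have h2 : x ^ ((3:ℝ) - 1) = x ^ (2:ℕ) := by
        rw [show (3:ℝ) - 1 = (2:ℕ) by norm_num, Real.rpow_natCast]
      have h0 : (1 - x) ^ ((1:ℝ) - 1) = 1 := by norm_num
      rw [h2, h0, ← ENNReal.ofReal_mul (by positivity),
        show (3:ℝ≥0∞) = ENNReal.ofReal 3 by simp]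
      apply ENNReal.ofReal_le_ofReal
      have hx := h.1
      rw [mul_one]
      rw [show 3 * x ^ (2:ℕ) * (x⁻¹ * x⁻¹) = 3 * ((x * x⁻¹) * (x * x⁻¹)) by ring]
      rw [mul_inv_cancel₀ (ne_of_gt hx)]
      norm_num
    · simp
  calc ∫⁻ x, (fun x => ENNReal.ofReal (_root_.betaPDFReal 3 1 x) * invSq x) x
      ≤ ∫⁻ x, (Ioo (0:ℝ) 1).indicator (fun _ => (3 : ℝ≥0∞)) x := lintegral_mono hbound
    _ = 3 * volume (Ioo (0:ℝ) 1) := by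
        rw [lintegral_indicator measurableSet_Ioo, setLIntegral_const]
    _ ≤ 3 := by simp [Real.volume_Ioo]

lemma key_ineq (x : ℝ) : x ^ (2:ℕ) * Real.exp (-(x ^ (2:ℕ))) ≤ 2 * Real.exp (-x) := by
  have h := Real.add_one_le_exp (x ^ 2 - x)
  have he : (0:ℝ) < Real.exp (-(x ^ 2)) := Real.exp_pos _
  have hmul : Real.exp (x ^ 2 - x) * Real.exp (-(x ^ 2)) = Real.exp (-x) := by
    rw [← Real.exp_add]; ring_nf
  nlinarith [mul_le_mul_of_nonneg_right h he.le, sq_nonneg (x - 1)]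

lemma gg52_moment :
    ∫⁻ x, invSq x ∂(genGammaMeasure 5 2) ≤ ENNReal.ofReal (4 / Real.Gamma (5/2)) := by
  have hΓ : (0:ℝ) < Real.Gamma (5/2) := Real.Gamma_pos_of_pos (by norm_num)
  rw [genGammaMeasure, lintegral_withDensity_eq_lintegral_mul volume
    (genGammaPDF_measurable 5 2).ennreal_ofReal invSq_meas]
  have hbound : ∀ x : ℝ, (fun x => ENNReal.ofReal (genGammaPDFReal 5 2 x) * invSq x) x
      ≤ (Ioi (0:ℝ)).indicator (fun x => ENNReal.ofReal (4 / Real.Gamma (5/2) * Real.exp (-x))) x := by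
    intro x
    simp only
    unfold genGammaPDFReal
    split_ifs with h
    · rw [indicator_of_mem (mem_Ioi.2 h), invSq_of_pos h]
      have h4 : x ^ ((5:ℝ) - 1) = x ^ (4:ℕ) := by
        rw [show (5:ℝ) - 1 = ((4:ℕ):ℝ) by norm_num, Real.rpow_natCast]
      have h2 : x ^ ((2:ℝ)) = x ^ (2:ℕ) := by
        rw [show (2:ℝ) = ((2:ℕ):ℝ) by norm_num, Real.rpow_natCast]
      rw [h4, h2, ← ENNReal.ofReal_mul (by positivity)]
      apply ENNReal.ofReal_le_ofReal
      have hx : x ≠ 0 := ne_of_gt h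
      have hre : (2:ℝ) / Real.Gamma (5/2) * x ^ (4:ℕ) * Real.exp (-(x ^ (2:ℕ))) * (x⁻¹ * x⁻¹)
          = 2 / Real.Gamma (5/2) * (x ^ (2:ℕ) * Real.exp (-(x ^ (2:ℕ)))) := by
        field_simp
      rw [hre]
      have := key_ineq x
      have hc : (0:ℝ) ≤ 2 / Real.Gamma (5/2) := by positivity
      calc 2 / Real.Gamma (5/2) * (x ^ (2:ℕ) * Real.exp (-(x ^ (2:ℕ))))
          ≤ 2 / Real.Gamma (5/2) * (2 * Real.exp (-x)) := by
            exact mul_le_mul_of_nonneg_left this hc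
        _ = 4 / Real.Gamma (5/2) * Real.exp (-x) := by ring
    · simp
  calc ∫⁻ x, (fun x => ENNReal.ofReal (genGammaPDFReal 5 2 x) * invSq x) x
      ≤ ∫⁻ x, (Ioi (0:ℝ)).indicator
          (fun x => ENNReal.ofReal (4 / Real.Gamma (5/2) * Real.exp (-x))) x :=
        lintegral_mono hbound
    _ = ∫⁻ x in Ioi (0:ℝ), ENNReal.ofReal (4 / Real.Gamma (5/2) * Real.exp (-x)) :=
        lintegral_indicator measurableSet_Ioi _
    _ = ENNReal.ofReal (∫ x in Ioi (0:ℝ), 4 / Real.Gamma (5/2) * Real.exp (-x)) := by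
        rw [← ofReal_integral_eq_lintegral_ofReal]
        · exact ((exp_neg_integrableOn_Ioi 0 one_pos).const_mul (4 / Real.Gamma (5/2))).congr
            (ae_of_all _ fun x => by norm_num)
        · exact ae_of_all _ fun x => by positivity
    _ ≤ ENNReal.ofReal (4 / Real.Gamma (5/2)) := by
        apply ENNReal.ofReal_le_ofReal
        rw [integral_const_mul, integral_exp_neg_Ioi_zero, mul_one]

lemma ae_pos_withDensity {f : ℝ → ℝ} (hf : ∀ x, x ≤ 0 → f x = 0) :
    ∀ᵐ x ∂(volume.withDensity fun x => ENNReal.ofReal (f x)), 0 < x := by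
  rw [ae_iff]
  have hs : MeasurableSet {x : ℝ | ¬ 0 < x} := by
    simp only [not_lt]
    exact measurableSet_le measurable_id measurable_const
  rw [withDensity_apply _ hs]
  have hb : ∀ x ∈ {x : ℝ | ¬ 0 < x}, ENNReal.ofReal (f x) ≤ (fun _ => (0:ℝ≥0∞)) x := by
    intro x hx
    simp only [mem_setOf_eq, not_lt] at hx
    simp [hf x hx]
  refine le_antisymm ((setLIntegral_mono measurable_const hb).trans ?_) (zero_le)
  simp

lemma beta31_ae_pos : ∀ᵐ x ∂(_root_.betaMeasure 3 1), 0 < x :=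
  ae_pos_withDensity fun x hx => by
    unfold _root_.betaPDFReal; rw [if_neg]; rintro ⟨h1, -⟩; linarith

lemma gg52_ae_pos : ∀ᵐ x ∂(genGammaMeasure 5 2), 0 < x :=
  ae_pos_withDensity fun x hx => by
    unfold genGammaPDFReal; rw [if_neg]; intro h1; linarith

/-- There is `C > 0` such that for all `ε ∈ (0,1)`, `P(D₂ ≤ √ε) ≤ C * ε`,
where `D₂ = (1-B₁)B₂Z₃`. -/
theorem eve_bound {Ω : Type*} [MeasurableSpace Ω] (P : Measure Ω) [IsProbabilityMeasure P]
    (B₁ B₂ Z₃ : Ω → ℝ) (hB₁ : Measurable B₁) (hB₂ : Measurable B₂) (hZ₃ : Measurable Z₃)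
    (hindep : iIndepFun ![B₁, B₂, Z₃] P)
    (hlaw₁ : P.map B₁ = _root_.betaMeasure 1 2)
    (hlaw₂ : P.map B₂ = _root_.betaMeasure 3 1)
    (hlaw₃ : P.map Z₃ = genGammaMeasure 5 2) :
    ∃ C : ℝ, 0 < C ∧ ∀ ε : ℝ, 0 < ε → ε < 1 →
      P {ω | (1 - B₁ ω) * B₂ ω * Z₃ ω ≤ Real.sqrt ε} ≤ ENNReal.ofReal (C * ε) := by
  have hΓ : (0:ℝ) < Real.Gamma (5/2) := Real.Gamma_pos_of_pos (by norm_num)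
  refine ⟨24 / Real.Gamma (5/2), by positivity, ?_⟩
  intro ε hε hε1
  have hmeas : ∀ i, Measurable (![B₁, B₂, Z₃] i) := by
    intro i; fin_cases i <;> assumption
  have hW : Measurable fun ω => B₂ ω * Z₃ ω := hB₂.mul hZ₃
  set μW := P.map (fun ω => B₂ ω * Z₃ ω) with hμW
  haveI : IsProbabilityMeasure (P.map B₁) := Measure.isProbabilityMeasure_map hB₁.aemeasurable
  haveI : IsProbabilityMeasure μW := Measure.isProbabilityMeasure_map hW.aemeasurable
  -- independence of W = B₂Z₃ and B₁
  have hWB₁ : IndepFun (fun ω => B₂ ω * Z₃ ω) B₁ P := by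
    have h := hindep.indepFun_prodMk hmeas 1 2 0 (by decide) (by decide)
    simp only [Matrix.cons_val_zero, Matrix.cons_val_one, Matrix.head_cons,
      Matrix.cons_val_two, Matrix.tail_cons] at h
    exact h.comp (measurable_fst.mul measurable_snd) measurable_id
  have hmap : P.map (fun ω => (B₂ ω * Z₃ ω, B₁ ω)) = μW.prod (P.map B₁) :=
    (indepFun_iff_map_prod_eq_prod_map_map hW.aemeasurable hB₁.aemeasurable).mp hWB₁
  -- positivity
  have hB₂pos : ∀ᵐ ω ∂P, 0 < B₂ ω := by
    have h := beta31_ae_pos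
    rw [← hlaw₂] at h
    exact (ae_map_iff hB₂.aemeasurable (measurableSet_lt measurable_const measurable_id)).mp h
  have hZ₃pos : ∀ᵐ ω ∂P, 0 < Z₃ ω := by
    have h := gg52_ae_pos
    rw [← hlaw₃] at h
    exact (ae_map_iff hZ₃.aemeasurable (measurableSet_lt measurable_const measurable_id)).mp h
  have hWpos : ∀ᵐ w ∂μW, 0 < w := by
    rw [hμW]
    refine (ae_map_iff hW.aemeasurable measurableSet_Ioi).mpr ?_
    filter_upwards [hB₂pos, hZ₃pos] with ω h2 h3 using mul_pos h2 h3
  -- moment bound for W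
  have hindep23 : IndepFun (fun ω => invSq (B₂ ω)) (fun ω => invSq (Z₃ ω)) P := by
    have h := hindep.indepFun (show (1 : Fin 3) ≠ 2 by decide)
    simp only [Matrix.cons_val_one, Matrix.head_cons, Matrix.cons_val_two,
      Matrix.tail_cons] at h
    exact h.comp invSq_meas invSq_meas
  have hWmoment : ∫⁻ w, invSq w ∂μW ≤ 3 * ENNReal.ofReal (4 / Real.Gamma (5/2)) := by
    rw [hμW, lintegral_map invSq_meas hW]
    have heq : ∀ᵐ ω ∂P, invSq (B₂ ω * Z₃ ω) = invSq (B₂ ω) * invSq (Z₃ ω) := by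
      filter_upwards [hB₂pos, hZ₃pos] with ω h2 h3 using invSq_mul h2 h3
    rw [lintegral_congr_ae heq]
    have hprod := lintegral_mul_eq_lintegral_mul_lintegral_of_indepFun
      (invSq_meas.comp hB₂) (invSq_meas.comp hZ₃) hindep23
    simp only [Pi.mul_apply, Function.comp_apply] at hprod
    rw [hprod, ← lintegral_map invSq_meas hB₂, ← lintegral_map invSq_meas hZ₃, hlaw₂, hlaw₃]
    exact mul_le_mul' beta31_moment gg52_moment
  -- main computation
  set s : Set (ℝ × ℝ) := {p : ℝ × ℝ | (1 - p.2) * p.1 ≤ Real.sqrt ε} with hsdef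
  have hsm : MeasurableSet s := measurableSet_le (by fun_prop) measurable_const
  have hE : {ω | (1 - B₁ ω) * B₂ ω * Z₃ ω ≤ Real.sqrt ε}
      = (fun ω => (B₂ ω * Z₃ ω, B₁ ω)) ⁻¹' s := by
    ext ω; simp [hsdef, mul_assoc]
  rw [hE, ← Measure.map_apply (hW.prodMk hB₁) hsm, hmap, Measure.prod_apply hsm]
  have hinner : ∀ᵐ w ∂μW,
      (P.map B₁) (Prod.mk w ⁻¹' s) ≤ ENNReal.ofReal (2 * ε) * invSq w := by
    filter_upwards [hWpos] with w hw
    have hpre : Prod.mk w ⁻¹' s = {x : ℝ | 1 - x ≤ Real.sqrt ε / w} := by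
      ext x
      simp only [hsdef, mem_preimage, mem_setOf_eq, le_div_iff₀ hw]
    rw [hpre, hlaw₁]
    refine (beta12_tail (δ := Real.sqrt ε / w) (by positivity)).trans_eq ?_
    rw [invSq_of_pos hw, ← ENNReal.ofReal_mul (by positivity)]
    congr 1
    rw [div_pow, Real.sq_sqrt hε.le]
    field_simp
  calc ∫⁻ w, (P.map B₁) (Prod.mk w ⁻¹' s) ∂μW
      ≤ ∫⁻ w, ENNReal.ofReal (2 * ε) * invSq w ∂μW := lintegral_mono_ae hinner
    _ = ENNReal.ofReal (2 * ε) * ∫⁻ w, invSq w ∂μW := lintegral_const_mul _ invSq_meas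
    _ ≤ ENNReal.ofReal (2 * ε) * (3 * ENNReal.ofReal (4 / Real.Gamma (5/2))) := by
        gcongr
    _ ≤ ENNReal.ofReal (24 / Real.Gamma (5/2) * ε) := by
        rw [show (3:ℝ≥0∞) = ENNReal.ofReal 3 by simp,
          ← ENNReal.ofReal_mul (by norm_num), ← ENNReal.ofReal_mul (by positivity)]
        exact le_of_eq (by congr 1; field_simp; ring)
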